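/- arXiv:1404.1594 — 7 statements merged into one kernel-verified Lean document; each statement's English description precedes it below -/
import Mathlib

section
/- For every natural number n, (1/√π) ∫_0^1 t^n (-ln t)^{-1/2} dt = 1/√(n+1). Consequently, the measure (1/√π)(-ln t)^{-1/2} dt on (0,1) is a probability measure whose n-th moment squared equals the n-th moment of Lebesgue measure on [0,1]. -/
open MeasureTheory Set Real

lemma image_exp_neg : (fun x : ℝ => Real.exp (-x)) '' Ioi 0 = Ioo (0:ℝ) 1 := by
  ext t
  constructor
  · rintro ⟨x, hx, rfl⟩
    exact ⟨Real.exp_pos _, by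
      rw [Real.exp_lt_one_iff]; simpa using hx⟩
  · rintro ⟨h0, h1⟩
    exact ⟨-Real.log t, by simpa using Real.log_neg h0 h1, by
      simp [Real.exp_log h0]⟩

/-- The square root measure of Lebesgue measure on `[0,1]` is
`(1/√π)(-ln t)^{-1/2} dt` : its `n`-th moment is `1/√(n+1)`. -/
theorem sqrt_of_lebesgue_moments (n : ℕ) :
    (1 / Real.sqrt π) * ∫ t in Ioo (0:ℝ) 1, t ^ n * (-Real.log t) ^ (-(1/2) : ℝ) =
      1 / Real.sqrt ((n : ℝ) + 1) := by
  have hsub : ∫ t in Ioo (0:ℝ) 1, t ^ n * (-Real.log t) ^ (-(1/2) : ℝ)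
      = ∫ x in Ioi (0:ℝ), |(-Real.exp (-x))| •
        ((Real.exp (-x)) ^ n * (-Real.log (Real.exp (-x))) ^ (-(1/2) : ℝ)) := by
    rw [← image_exp_neg]
    apply integral_image_eq_integral_abs_deriv_smul measurableSet_Ioi
    · intro x _
      have : HasDerivAt (fun x : ℝ => Real.exp (-x)) (-Real.exp (-x)) x := by
        simpa [Function.comp_def] using (Real.hasDerivAt_exp (-x)).comp x (hasDerivAt_neg x)
      exact this.hasDerivWithinAt
    · intro a _ b _ hab
      have := Real.exp_injective hab
      linarith [neg_injective this]
  have key : ∫ x in Ioi (0:ℝ), |(-Real.exp (-x))| •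
        ((Real.exp (-x)) ^ n * (-Real.log (Real.exp (-x))) ^ (-(1/2) : ℝ))
      = ∫ x in Ioi (0:ℝ), x ^ ((1/2:ℝ) - 1) * Real.exp (-(((n:ℝ)+1) * x)) := by
    apply setIntegral_congr_fun measurableSet_Ioi
    intro x hx
    have hx0 : (0:ℝ) < x := hx
    simp only
    rw [Real.log_exp, abs_neg, abs_of_pos (Real.exp_pos _), smul_eq_mul, neg_neg,
      ← Real.exp_nat_mul, show ((1:ℝ)/2) - 1 = -(1/2) by norm_num,
      show (n:ℝ) * -x = -((n:ℝ)*x) by ring]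
    rw [show rexp (-x) * (rexp (-((n:ℝ)*x)) * x ^ (-(1/2):ℝ)) =
      x ^ (-(1/2):ℝ) * (rexp (-x) * rexp (-((n:ℝ)*x))) by ring, ← Real.exp_add,
      show -x + -((n:ℝ)*x) = -(((n:ℝ)+1)*x) by ring]
  rw [hsub, key, integral_rpow_mul_exp_neg_mul_Ioi (by norm_num) (by positivity)]
  rw [Real.Gamma_one_half_eq, ← Real.sqrt_eq_rpow, show (1:ℝ)/((n:ℝ)+1) = ((n:ℝ)+1)⁻¹ by ring, Real.sqrt_inv]
  have h1 : Real.sqrt π ≠ 0 := by positivity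
  have h2 : Real.sqrt ((n:ℝ)+1) ≠ 0 := by positivity
  field_simp
end

section
/- Let μ and ν be finite measures on ℝ with compact support contained in [0,∞) such that ∫ t^n dμ(t) = (∫ t^n dν(t))^2 for all natural numbers n. Then μ equals the pushforward of the product measure ν × ν under the multiplication map p(x,y) = x·y. -/
open MeasureTheory Set

open scoped NNReal BoundedContinuousFunction

lemma aux_ae_mem {μ : Measure ℝ} {s : Set ℝ} (hμ : μ sᶜ = 0) :
    ∀ᵐ x ∂μ, x ∈ s := by
  rw [ae_iff]
  exact hμ

lemma aux_integrable {μ : Measure ℝ} [IsFiniteMeasure μ] {a b : ℝ}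
    (hμ : μ (Icc a b)ᶜ = 0) {f : ℝ → ℝ} (hf : Continuous f) : Integrable f μ := by
  obtain ⟨C, hC⟩ := (isCompact_Icc (a := a) (b := b)).exists_bound_of_continuousOn
    hf.continuousOn
  refine (integrable_const C).mono' hf.aestronglyMeasurable ?_
  filter_upwards [aux_ae_mem hμ] with x hx using hC x hx

/-- Two finite measures supported on a common compact interval with equal polynomial
integrals are equal. -/
lemma ext_of_poly (μ π : Measure ℝ) [IsFiniteMeasure μ] [IsFiniteMeasure π] (a b : ℝ)
    (hμ : μ (Icc a b)ᶜ = 0) (hπ : π (Icc a b)ᶜ = 0)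
    (hpoly : ∀ q : Polynomial ℝ, (∫ x, q.eval x ∂μ) = ∫ x, q.eval x ∂π) : μ = π := by
  -- first: equality of integrals of bounded continuous real functions
  have hint : ∀ f : ℝ →ᵇ ℝ, (∫ x, f x ∂μ) = ∫ x, f x ∂π := by
    intro f
    set D := (∫ x, f x ∂μ) - ∫ x, f x ∂π with hD
    have key : ∀ ε : ℝ, 0 < ε →
        |D| ≤ ε * ((μ univ).toReal + (π univ).toReal) := by
      intro ε hε
      obtain ⟨q, hq⟩ := exists_polynomial_near_of_continuousOn a b f
        f.continuous.continuousOn ε hε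
      have hqC : Continuous fun x => q.eval x := q.continuous
      have hμq : Integrable (fun x => q.eval x) μ := aux_integrable hμ hqC
      have hπq : Integrable (fun x => q.eval x) π := aux_integrable hπ hqC
      have h1 : |(∫ x, f x ∂μ) - ∫ x, q.eval x ∂μ| ≤ ε * (μ univ).toReal := by
        rw [← integral_sub (f.integrable μ) hμq]
        calc |∫ x, (f x - q.eval x) ∂μ|
            ≤ ∫ x, ε ∂μ := by
              rw [← Real.norm_eq_abs]
              refine norm_integral_le_of_norm_le (integrable_const ε) ?_
              filter_upwards [aux_ae_mem hμ] with x hx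
              rw [Real.norm_eq_abs, abs_sub_comm]
              exact le_of_lt (hq x hx)
          _ = ε * (μ univ).toReal := by simp [mul_comm, Measure.real]
      have h2 : |(∫ x, f x ∂π) - ∫ x, q.eval x ∂π| ≤ ε * (π univ).toReal := by
        rw [← integral_sub (f.integrable π) hπq]
        calc |∫ x, (f x - q.eval x) ∂π|
            ≤ ∫ x, ε ∂π := by
              rw [← Real.norm_eq_abs]
              refine norm_integral_le_of_norm_le (integrable_const ε) ?_
              filter_upwards [aux_ae_mem hπ] with x hx
              rw [Real.norm_eq_abs, abs_sub_comm]
              exact le_of_lt (hq x hx)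
          _ = ε * (π univ).toReal := by simp [mul_comm, Measure.real]
      have hqeq := hpoly q
      calc |D| = |((∫ x, f x ∂μ) - ∫ x, q.eval x ∂μ)
            - ((∫ x, f x ∂π) - ∫ x, q.eval x ∂π)| := by rw [hD, hqeq]; ring_nf
        _ ≤ |(∫ x, f x ∂μ) - ∫ x, q.eval x ∂μ|
            + |(∫ x, f x ∂π) - ∫ x, q.eval x ∂π| := abs_sub _ _
        _ ≤ ε * (μ univ).toReal + ε * (π univ).toReal := add_le_add h1 h2
        _ = ε * ((μ univ).toReal + (π univ).toReal) := by ring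
    have hD0 : |D| ≤ 0 := by
      refine le_of_forall_pos_le_add ?_
      intro ε hε
      set C := (μ univ).toReal + (π univ).toReal with hC
      have hCnn : 0 ≤ C := add_nonneg ENNReal.toReal_nonneg ENNReal.toReal_nonneg
      have hεC : 0 < ε / (C + 1) := by positivity
      calc |D| ≤ ε / (C + 1) * C := key _ hεC
        _ ≤ ε / (C + 1) * (C + 1) := by nlinarith
        _ = ε := by field_simp
        _ = 0 + ε := by ring
    have : D = 0 := abs_nonpos_iff.mp hD0
    linarith [this]
  -- now upgrade to lintegrals of bounded continuous ℝ≥0 functions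
  refine ext_of_forall_lintegral_eq_of_IsFiniteMeasure ?_
  intro f
  have hμf := f.lintegral_lt_top_of_nnreal μ
  have hπf := f.lintegral_lt_top_of_nnreal π
  rw [← ENNReal.toReal_eq_toReal_iff' hμf.ne hπf.ne,
    BoundedContinuousFunction.toReal_lintegral_coe_eq_integral,
    BoundedContinuousFunction.toReal_lintegral_coe_eq_integral]
  have hlip : LipschitzWith 1 ((↑) : ℝ≥0 → ℝ) :=
    LipschitzWith.of_dist_le_mul fun x y => by
      rw [NNReal.dist_eq, Real.dist_eq]
      simp
  exact hint (BoundedContinuousFunction.comp _ hlip f)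

/-- If `μ` and `ν` are finite, compactly supported measures on `[0,∞)` whose moments
satisfy `∫ t^n dμ = (∫ t^n dν)^2` for all `n`, then `μ` is the pushforward of `ν × ν`
under the multiplication map `p(x,y) = x·y`. -/
theorem square_measure_eq_pushforward_of_product
    (μ ν : Measure ℝ) [IsFiniteMeasure μ] [IsFiniteMeasure ν]
    (K : Set ℝ) (hK : IsCompact K) (hKpos : K ⊆ Ici (0:ℝ))
    (hμK : μ Kᶜ = 0) (hνK : ν Kᶜ = 0)
    (h : ∀ n : ℕ, (∫ t, t ^ n ∂μ) = (∫ t, t ^ n ∂ν) ^ 2) :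
    μ = Measure.map (fun p : ℝ × ℝ => p.1 * p.2) (ν.prod ν) := by
  set pm : ℝ × ℝ → ℝ := fun p => p.1 * p.2 with hpm
  have hpmm : Measurable pm := measurable_fst.mul measurable_snd
  set π := Measure.map pm (ν.prod ν) with hπ
  -- K is contained in some [0, R]
  obtain ⟨R, hR⟩ := hK.isBounded.subset_ball 0
  have hKR : K ⊆ Icc 0 R := by
    intro x hx
    have h1 := hKpos hx
    have h2 := hR hx
    rw [Metric.mem_ball, Real.dist_eq, sub_zero] at h2
    exact ⟨h1, le_of_lt (lt_of_le_of_lt (le_abs_self x) h2)⟩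
  set M := max R (R * R) with hM
  have hKM : K ⊆ Icc 0 M := hKR.trans (Icc_subset_Icc le_rfl (le_max_left _ _))
  -- μ vanishes outside Icc 0 M
  have hμM : μ (Icc 0 M)ᶜ = 0 :=
    measure_mono_null (compl_subset_compl.mpr hKM) hμK
  -- π vanishes outside Icc 0 M
  have hπM : π (Icc 0 M)ᶜ = 0 := by
    rw [hπ, Measure.map_apply hpmm (measurableSet_Icc.compl)]
    refine measure_mono_null (t := (Kᶜ ×ˢ univ) ∪ (univ ×ˢ Kᶜ)) ?_ ?_
    · intro p hp
      by_contra hcon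
      simp only [mem_union, mem_prod, mem_univ, and_true, true_and, mem_compl_iff,
        not_or, not_not] at hcon
      obtain ⟨h1, h2⟩ := hcon
      have hx := hKR h1
      have hy := hKR h2
      have : pm p ∈ Icc 0 M := by
        constructor
        · exact mul_nonneg hx.1 hy.1
        · calc p.1 * p.2 ≤ R * R := mul_le_mul hx.2 hy.2 hy.1 (hx.1.trans hx.2)
            _ ≤ M := le_max_right _ _
      exact hp this
    · refine measure_union_null ?_ ?_ <;>
        rw [Measure.prod_prod] <;> simp [hνK]
  -- moments of π
  have hπmom : ∀ n : ℕ, (∫ t, t ^ n ∂π) = (∫ t, t ^ n ∂ν) ^ 2 := by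
    intro n
    rw [hπ, integral_map hpmm.aemeasurable
      (Continuous.aestronglyMeasurable (continuous_pow n))]
    have : ∀ p : ℝ × ℝ, pm p ^ n = p.1 ^ n * p.2 ^ n := fun p => mul_pow _ _ _
    simp_rw [this]
    rw [integral_prod_mul (fun x : ℝ => x ^ n) (fun y : ℝ => y ^ n), sq]
  -- polynomial integrals coincide
  have hpoly : ∀ q : Polynomial ℝ, (∫ x, q.eval x ∂μ) = ∫ x, q.eval x ∂π := by
    intro q
    have heval : ∀ x : ℝ, q.eval x =
        ∑ i ∈ Finset.range (q.natDegree + 1), q.coeff i * x ^ i := by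
      intro x
      rw [Polynomial.eval_eq_sum_range]
    have hintμ : ∀ i : ℕ, Integrable (fun x : ℝ => q.coeff i * x ^ i) μ :=
      fun i => aux_integrable hμM (continuous_const.mul (continuous_pow i))
    have hintπ : ∀ i : ℕ, Integrable (fun x : ℝ => q.coeff i * x ^ i) π :=
      fun i => aux_integrable hπM (continuous_const.mul (continuous_pow i))
    simp_rw [heval]
    rw [integral_finset_sum _ (fun i _ => hintμ i),
      integral_finset_sum _ (fun i _ => hintπ i)]
    refine Finset.sum_congr rfl fun i _ => ?_
    rw [integral_const_mul, integral_const_mul, h i, hπmom i]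
  exact ext_of_poly μ π 0 M hμM hπM hpoly
end

section
/- Let μ and ν be finite measures supported in a compact subset of [0,∞) with ∫ t^n dμ = (∫ t^n dν)^2 for all n. Then the support of μ equals the closure of the set {s·t : s, t ∈ supp(ν)}. -/
open MeasureTheory Set Polynomial

/-- The (closed) support of a measure `μ` on `ℝ`: the set of points all of whose
neighborhoods have positive measure. -/
def measureSupport (μ : MeasureTheory.Measure ℝ) : Set ℝ :=
  {x : ℝ | ∀ U ∈ nhds x, 0 < μ U}

/-- generic version of `measureSupport` -/
def msupp {α : Type*} [TopologicalSpace α] [MeasurableSpace α] (ρ : Measure α) : Set α :=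
  {x : α | ∀ U ∈ nhds x, 0 < ρ U}

lemma measureSupport_eq_msupp (μ : Measure ℝ) : measureSupport μ = msupp μ := rfl

section generic
variable {α : Type*} [TopologicalSpace α] [MeasurableSpace α] {ρ : Measure α}

lemma mem_msupp_iff {x : α} :
    x ∈ msupp ρ ↔ ∀ U : Set α, IsOpen U → x ∈ U → 0 < ρ U := by
  constructor
  · intro hx U hU hxU
    exact hx U (hU.mem_nhds hxU)
  · intro hx U hU
    obtain ⟨V, hVU, hVopen, hxV⟩ := mem_nhds_iff.mp hU
    exact lt_of_lt_of_le (hx V hVopen hxV) (measure_mono hVU)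

lemma isClosed_msupp (ρ : Measure α) : IsClosed (msupp ρ) := by
  rw [← isOpen_compl_iff, isOpen_iff_mem_nhds]
  intro x hx
  simp only [msupp, mem_compl_iff, mem_setOf_eq, not_forall] at hx
  obtain ⟨U, hU, hμU⟩ := hx
  push_neg at hμU
  obtain ⟨V, hVU, hVopen, hxV⟩ := mem_nhds_iff.mp hU
  filter_upwards [hVopen.mem_nhds hxV] with y hy
  simp only [msupp, mem_compl_iff, mem_setOf_eq, not_forall]
  refine ⟨V, hVopen.mem_nhds hy, ?_⟩
  push_neg
  exact le_trans (measure_mono hVU) (le_of_eq (le_antisymm hμU zero_le))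

lemma measure_compl_msupp [SecondCountableTopology α] (ρ : Measure α) :
    ρ (msupp ρ)ᶜ = 0 := by
  set B := TopologicalSpace.countableBasis α with hB
  have hbasis := TopologicalSpace.isBasis_countableBasis α
  have hsub : (msupp ρ)ᶜ ⊆ ⋃₀ {b ∈ B | ρ b = 0} := by
    intro x hx
    simp only [msupp, mem_compl_iff, mem_setOf_eq, not_forall] at hx
    obtain ⟨U, hU, hμU⟩ := hx
    have hμU0 : ρ U = 0 := by
      by_contra hne
      exact hμU (pos_iff_ne_zero.mpr hne)
    obtain ⟨b, hbB, hxb, hbU⟩ := hbasis.mem_nhds_iff.mp hU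
    exact ⟨b, ⟨hbB, measure_mono_null hbU hμU0⟩, hxb⟩
  refine measure_mono_null hsub ?_
  rw [measure_sUnion_null_iff ((TopologicalSpace.countable_countableBasis α).mono (sep_subset _ _))]
  exact fun s hs => hs.2

end generic

lemma msupp_map (ρ : Measure (ℝ × ℝ)) (m : ℝ × ℝ → ℝ) (hm : Continuous m) :
    msupp (ρ.map m) = closure (m '' msupp ρ) := by
  apply Subset.antisymm
  · intro x hx
    by_contra hxc
    obtain ⟨U, hUopen, hxU, hUdisj⟩ :
        ∃ U : Set ℝ, IsOpen U ∧ x ∈ U ∧ U ∩ m '' msupp ρ = ∅ := by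
      have : (closure (m '' msupp ρ))ᶜ ∈ nhds x :=
        (isClosed_closure.isOpen_compl).mem_nhds hxc
      refine ⟨(closure (m '' msupp ρ))ᶜ, isClosed_closure.isOpen_compl, hxc, ?_⟩
      rw [eq_empty_iff_forall_notMem]
      rintro z ⟨hz1, hz2⟩
      exact hz1 (subset_closure hz2)
    have hpos := mem_msupp_iff.mp hx U hUopen hxU
    rw [Measure.map_apply hm.measurable hUopen.measurableSet] at hpos
    have : m ⁻¹' U ⊆ (msupp ρ)ᶜ := by
      intro p hp
      intro hps
      rw [eq_empty_iff_forall_notMem] at hUdisj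
      exact hUdisj (m p) ⟨hp, ⟨p, hps, rfl⟩⟩
    have := measure_mono_null this (measure_compl_msupp ρ)
    exact absurd this hpos.ne'
  · rw [(isClosed_msupp (ρ.map m)).closure_subset_iff]
    rintro _ ⟨p, hp, rfl⟩
    rw [mem_msupp_iff]
    intro U hUopen hxU
    rw [Measure.map_apply hm.measurable hUopen.measurableSet]
    exact mem_msupp_iff.mp hp _ (hUopen.preimage hm) hxU

lemma msupp_prod (ν : Measure ℝ) [IsFiniteMeasure ν] :
    msupp (ν.prod ν) = (msupp ν) ×ˢ (msupp ν) := by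
  ext ⟨x, y⟩
  simp only [mem_prod]
  constructor
  · intro hxy
    constructor
    · rw [mem_msupp_iff]
      intro U hU hxU
      have := mem_msupp_iff.mp hxy (U ×ˢ univ) (hU.prod isOpen_univ) ⟨hxU, trivial⟩
      rw [Measure.prod_prod] at this
      by_contra hc
      push_neg at hc
      rw [le_antisymm hc zero_le, zero_mul] at this
      exact lt_irrefl _ this
    · rw [mem_msupp_iff]
      intro U hU hyU
      have := mem_msupp_iff.mp hxy (univ ×ˢ U) (isOpen_univ.prod hU) ⟨trivial, hyU⟩
      rw [Measure.prod_prod] at this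
      by_contra hc
      push_neg at hc
      rw [le_antisymm hc zero_le, mul_zero] at this
      exact lt_irrefl _ this
  · rintro ⟨hx, hy⟩
    rw [mem_msupp_iff]
    intro W hW hxyW
    obtain ⟨U, V, hU, hV, hxU, hyV, hUV⟩ := isOpen_prod_iff.mp hW x y hxyW
    refine lt_of_lt_of_le ?_ (measure_mono hUV)
    rw [Measure.prod_prod]
    exact ENNReal.mul_pos (mem_msupp_iff.mp hx U hU hxU).ne' (mem_msupp_iff.mp hy V hV hyV).ne'


lemma poly_integral_eq (μ₁ μ₂ : Measure ℝ) [IsFiniteMeasure μ₁] [IsFiniteMeasure μ₂]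
    {a b : ℝ} (h₁ : μ₁.restrict (Icc a b) = μ₁) (h₂ : μ₂.restrict (Icc a b) = μ₂)
    (h : ∀ n : ℕ, (∫ t, t ^ n ∂μ₁) = ∫ t, t ^ n ∂μ₂) (p : ℝ[X]) :
    ∫ t, p.eval t ∂μ₁ = ∫ t, p.eval t ∂μ₂ := by
  have integ : ∀ (μ : Measure ℝ) [IsFiniteMeasure μ], μ.restrict (Icc a b) = μ →
      ∀ f : ℝ → ℝ, Continuous f → Integrable f μ := by
    intro μ _ hμ f hf
    rw [← hμ]
    exact (hf.continuousOn).integrableOn_compact isCompact_Icc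
  have huniv : (μ₁ univ).toReal = (μ₂ univ).toReal := by
    have := h 0
    exact (by simpa [integral_const] using this : μ₁.real univ = μ₂.real univ)
  induction p using Polynomial.induction_on with
  | C c =>
    simp [integral_const, Measure.real, huniv]
  | add p q hp hq =>
    simp only [eval_add]
    rw [integral_add (integ μ₁ h₁ _ p.continuous) (integ μ₁ h₁ _ q.continuous),
      integral_add (integ μ₂ h₂ _ p.continuous) (integ μ₂ h₂ _ q.continuous), hp, hq]
  | monomial n c _ =>
    simp only [eval_mul, eval_C, eval_pow, eval_X]
    rw [integral_const_mul, integral_const_mul, h (n + 1)]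

lemma cont_integral_eq (μ₁ μ₂ : Measure ℝ) [IsFiniteMeasure μ₁] [IsFiniteMeasure μ₂]
    {a b : ℝ} (h₁ : μ₁ (Icc a b)ᶜ = 0) (h₂ : μ₂ (Icc a b)ᶜ = 0)
    (h : ∀ n : ℕ, (∫ t, t ^ n ∂μ₁) = ∫ t, t ^ n ∂μ₂)
    (f : ℝ → ℝ) (hf : Continuous f) : ∫ t, f t ∂μ₁ = ∫ t, f t ∂μ₂ := by
  have hr₁ : μ₁.restrict (Icc a b) = μ₁ :=
    Measure.restrict_eq_self_of_ae_mem (by rw [ae_iff]; exact h₁)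
  have hr₂ : μ₂.restrict (Icc a b) = μ₂ :=
    Measure.restrict_eq_self_of_ae_mem (by rw [ae_iff]; exact h₂)
  have integ : ∀ (μ : Measure ℝ) [IsFiniteMeasure μ], μ.restrict (Icc a b) = μ →
      ∀ g : ℝ → ℝ, Continuous g → Integrable g μ := by
    intro μ _ hμ g hg
    rw [← hμ]
    exact (hg.continuousOn).integrableOn_compact isCompact_Icc
  set C : ℝ := (μ₁ univ).toReal + (μ₂ univ).toReal with hC
  have hC0 : 0 ≤ C := add_nonneg ENNReal.toReal_nonneg ENNReal.toReal_nonneg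
  -- key estimate for one measure
  have est : ∀ (μ : Measure ℝ) [IsFiniteMeasure μ], μ.restrict (Icc a b) = μ →
      ∀ (g : ℝ → ℝ), Continuous g → (∀ x ∈ Icc a b, |g x| ≤ 1) → ∀ ε : ℝ, 0 < ε →
      |∫ t, ε * g t ∂μ| ≤ ε * (μ univ).toReal := by
    intro μ _ hμ g hg hgle ε hε
    calc |∫ t, ε * g t ∂μ| ≤ ∫ t, |ε * g t| ∂μ := by
          simpa [Real.norm_eq_abs, abs_mul] using
            norm_integral_le_integral_norm (μ := μ) (fun t => ε * g t)
      _ ≤ ∫ t, ε ∂μ := by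
          rw [← hμ]
          refine integral_mono_of_nonneg (Filter.Eventually.of_forall fun t => abs_nonneg _)
            (integrable_const ε) ?_
          rw [Filter.EventuallyLE, ae_restrict_iff' measurableSet_Icc]
          refine Filter.Eventually.of_forall fun t ht => ?_
          rw [abs_mul, abs_of_pos hε]
          calc ε * |g t| ≤ ε * 1 := by
                exact mul_le_mul_of_nonneg_left (hgle t ht) hε.le
            _ = ε := mul_one ε
      _ = ε * (μ univ).toReal := by rw [integral_const, smul_eq_mul, mul_comm]; rfl
  have key : ∀ ε : ℝ, 0 < ε → |∫ t, f t ∂μ₁ - ∫ t, f t ∂μ₂| ≤ ε := by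
    intro ε hε
    set ε' : ℝ := ε / (C + 1) with hε'
    have hε'0 : 0 < ε' := div_pos hε (by linarith)
    obtain ⟨p, hp⟩ := exists_polynomial_near_of_continuousOn a b f hf.continuousOn ε' hε'0
    have hfp₁ := est μ₁ hr₁ (fun x => (f x - p.eval x) / ε') ((hf.sub p.continuous).div_const ε')
      (fun x hx => by
        rw [abs_div, abs_of_pos hε'0, div_le_one hε'0, abs_sub_comm]
        exact (hp x hx).le) ε' hε'0
    have hfp₂ := est μ₂ hr₂ (fun x => (f x - p.eval x) / ε') ((hf.sub p.continuous).div_const ε')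
      (fun x hx => by
        rw [abs_div, abs_of_pos hε'0, div_le_one hε'0, abs_sub_comm]
        exact (hp x hx).le) ε' hε'0
    have hmul : ∀ t : ℝ, ε' * ((f t - p.eval t) / ε') = f t - p.eval t := by
      intro t; field_simp
    simp only [hmul] at hfp₁ hfp₂
    have hint₁ : ∫ t, f t - p.eval t ∂μ₁ = (∫ t, f t ∂μ₁) - ∫ t, p.eval t ∂μ₁ :=
      integral_sub (integ μ₁ hr₁ f hf) (integ μ₁ hr₁ _ p.continuous)
    have hint₂ : ∫ t, f t - p.eval t ∂μ₂ = (∫ t, f t ∂μ₂) - ∫ t, p.eval t ∂μ₂ :=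
      integral_sub (integ μ₂ hr₂ f hf) (integ μ₂ hr₂ _ p.continuous)
    rw [hint₁] at hfp₁
    rw [hint₂] at hfp₂
    have hpeq : ∫ t, p.eval t ∂μ₁ = ∫ t, p.eval t ∂μ₂ := poly_integral_eq μ₁ μ₂ hr₁ hr₂ h p
    calc |∫ t, f t ∂μ₁ - ∫ t, f t ∂μ₂|
        = |((∫ t, f t ∂μ₁) - ∫ t, p.eval t ∂μ₁) - ((∫ t, f t ∂μ₂) - ∫ t, p.eval t ∂μ₂)| := by
          rw [hpeq]; congr 1; ring
      _ ≤ |(∫ t, f t ∂μ₁) - ∫ t, p.eval t ∂μ₁| + |(∫ t, f t ∂μ₂) - ∫ t, p.eval t ∂μ₂| :=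
          abs_sub _ _
      _ ≤ ε' * (μ₁ univ).toReal + ε' * (μ₂ univ).toReal := add_le_add hfp₁ hfp₂
      _ = ε' * C := by rw [hC]; ring
      _ ≤ ε' * (C + 1) := by nlinarith
      _ = ε := by rw [hε']; field_simp
  have : |∫ t, f t ∂μ₁ - ∫ t, f t ∂μ₂| ≤ 0 := by
    by_contra hc
    push_neg at hc
    have := key (|∫ t, f t ∂μ₁ - ∫ t, f t ∂μ₂| / 2) (by linarith)
    linarith
  have h0 := abs_nonneg (∫ t, f t ∂μ₁ - ∫ t, f t ∂μ₂)
  have := abs_eq_zero.mp (le_antisymm this h0)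
  linarith

lemma ext_of_moments (μ₁ μ₂ : Measure ℝ) [IsFiniteMeasure μ₁] [IsFiniteMeasure μ₂]
    {a b : ℝ} (h₁ : μ₁ (Icc a b)ᶜ = 0) (h₂ : μ₂ (Icc a b)ᶜ = 0)
    (h : ∀ n : ℕ, (∫ t, t ^ n ∂μ₁) = ∫ t, t ^ n ∂μ₂) : μ₁ = μ₂ := by
  apply ext_of_forall_lintegral_eq_of_IsFiniteMeasure
  intro g
  have hcont : Continuous (fun x : ℝ => (g x : ℝ)) := NNReal.continuous_coe.comp g.continuous
  have hint := cont_integral_eq μ₁ μ₂ h₁ h₂ h _ hcont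
  have t₁ := BoundedContinuousFunction.toReal_lintegral_coe_eq_integral g μ₁
  have t₂ := BoundedContinuousFunction.toReal_lintegral_coe_eq_integral g μ₂
  have f₁ := BoundedContinuousFunction.lintegral_lt_top_of_nnreal μ₁ g
  have f₂ := BoundedContinuousFunction.lintegral_lt_top_of_nnreal μ₂ g
  exact (ENNReal.toReal_eq_toReal_iff' f₁.ne f₂.ne).mp (by rw [t₁, t₂, hint])

/-- If `μ` and `ν` are finite, compactly supported measures on `[0,∞)` whose moments
satisfy `∫ t^n dμ = (∫ t^n dν)^2` for all `n`, then
`supp(μ)` is the closure of the product set `{s·t : s,t ∈ supp(ν)}`. -/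
theorem support_of_square_measure
    (μ ν : Measure ℝ) [IsFiniteMeasure μ] [IsFiniteMeasure ν]
    (K : Set ℝ) (hK : IsCompact K) (hKpos : K ⊆ Ici (0:ℝ))
    (hμK : μ Kᶜ = 0) (hνK : ν Kᶜ = 0)
    (h : ∀ n : ℕ, (∫ t, t ^ n ∂μ) = (∫ t, t ^ n ∂ν) ^ 2) :
    measureSupport μ =
      closure {z : ℝ | ∃ s ∈ measureSupport ν, ∃ t ∈ measureSupport ν, z = s * t} := by
  set m : ℝ × ℝ → ℝ := fun p => p.1 * p.2 with hm
  have hmc : Continuous m := continuous_fst.mul continuous_snd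
  set μ' : Measure ℝ := (ν.prod ν).map m with hμ'
  haveI : IsFiniteMeasure μ' := Measure.isFiniteMeasure_map _ m
  -- bounding interval
  obtain ⟨r, hr⟩ := hK.isBounded.subset_closedBall 0
  set R : ℝ := max r 0 with hR
  have hR0 : 0 ≤ R := le_max_right _ _
  have hKR : K ⊆ Icc 0 R := by
    intro x hx
    refine ⟨hKpos hx, ?_⟩
    have := hr hx
    rw [Real.closedBall_eq_Icc] at this
    exact le_trans this.2 (by simp [hR])
  set b : ℝ := max R (R * R) with hb
  have hKb : K ⊆ Icc 0 b := fun x hx => ⟨(hKR hx).1, le_trans (hKR hx).2 (le_max_left _ _)⟩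
  have hμI : μ (Icc 0 b)ᶜ = 0 :=
    measure_mono_null (compl_subset_compl.mpr hKb) hμK
  have hνprodKK : (ν.prod ν) (K ×ˢ K)ᶜ = 0 := by
    have hsub : (K ×ˢ K)ᶜ ⊆ (Kᶜ ×ˢ univ) ∪ (univ ×ˢ Kᶜ) := by
      rintro ⟨x, y⟩ hxy
      simp only [mem_compl_iff, mem_prod, not_and] at hxy
      by_cases hx : x ∈ K
      · exact Or.inr ⟨trivial, hxy hx⟩
      · exact Or.inl ⟨hx, trivial⟩
    refine measure_mono_null hsub (measure_union_null ?_ ?_) <;>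
      simp [Measure.prod_prod, hνK]
  have hμ'I : μ' (Icc 0 b)ᶜ = 0 := by
    rw [hμ', Measure.map_apply hmc.measurable measurableSet_Icc.compl]
    refine measure_mono_null ?_ hνprodKK
    rintro ⟨x, y⟩ hxy
    simp only [mem_preimage, mem_compl_iff] at hxy ⊢
    intro hxyK
    apply hxy
    have hx := hKR hxyK.1
    have hy := hKR hxyK.2
    constructor
    · exact mul_nonneg hx.1 hy.1
    · exact le_trans (mul_le_mul hx.2 hy.2 hy.1 hR0) (le_max_right _ _)
  -- moments of μ'
  have hmom : ∀ n : ℕ, (∫ t, t ^ n ∂μ) = ∫ t, t ^ n ∂μ' := by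
    intro n
    rw [hμ', integral_map hmc.measurable.aemeasurable
      (continuous_pow n).aestronglyMeasurable]
    simp only [hm, mul_pow]
    rw [MeasureTheory.integral_prod_mul (fun x : ℝ => x ^ n) (fun y : ℝ => y ^ n), h n, sq]
  have hμeq : μ = μ' := ext_of_moments μ μ' hμI hμ'I hmom
  have hset : m '' ((msupp ν) ×ˢ (msupp ν)) =
      {z : ℝ | ∃ s ∈ measureSupport ν, ∃ t ∈ measureSupport ν, z = s * t} := by
    ext z
    simp only [mem_image, mem_prod, mem_setOf_eq, Prod.exists, measureSupport_eq_msupp]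
    constructor
    · rintro ⟨s, t, ⟨hs, ht⟩, rfl⟩
      exact ⟨s, hs, t, ht, rfl⟩
    · rintro ⟨s, hs, t, ht, rfl⟩
      exact ⟨s, t, ⟨hs, ht⟩, rfl⟩
  rw [hμeq, measureSupport_eq_msupp, hμ', msupp_map _ m hmc, msupp_prod, hset]
end

section
/- Let μ = ρ_0 δ_{x_0} + ρ_1 δ_{x_1} be a probability measure on [0,1] with 0 < x_0 < x_1, ρ_0, ρ_1 > 0. Then there exists no measure ν on [0,∞) such that ∫ t^n dμ = (∫ t^n dν)^2 for all natural numbers n. -/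
open MeasureTheory Set ENNReal

lemma sqrt_upper_aux {y : ℝ} (hy : 0 ≤ y) :
    Real.sqrt (1 + y) ≤ 1 + y/2 - y^2/8 + y^3/16 := by
  have h0 : (0:ℝ) ≤ 1 + y/2 - y^2/8 + y^3/16 := by
    nlinarith [sq_nonneg (y - 1), sq_nonneg y, pow_nonneg hy 3]
  rw [show (1:ℝ) + y/2 - y^2/8 + y^3/16
      = Real.sqrt ((1 + y/2 - y^2/8 + y^3/16)^2) from (Real.sqrt_sq h0).symm]
  apply Real.sqrt_le_sqrt
  nlinarith [sq_nonneg y, pow_nonneg hy 3, pow_nonneg hy 4, pow_nonneg hy 5,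
    pow_nonneg hy 6, sq_nonneg (y^2 - y)]

lemma sqrt_lower_aux {y : ℝ} (hy : 0 ≤ y) (hy1 : y ≤ 1) :
    1 + y/2 - y^2/8 ≤ Real.sqrt (1 + y) := by
  have h0 : (0:ℝ) ≤ 1 + y/2 - y^2/8 := by nlinarith
  have h2 : (1 + y/2 - y^2/8)^2 ≤ 1 + y := by
    nlinarith [pow_nonneg hy 3, pow_nonneg hy 4]
  calc 1 + y/2 - y^2/8 = Real.sqrt ((1 + y/2 - y^2/8)^2) := (Real.sqrt_sq h0).symm
  _ ≤ Real.sqrt (1 + y) := Real.sqrt_le_sqrt h2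

set_option maxHeartbeats 1000000 in
lemma psi_neg_aux (Q x u0 u1 u2 u3 u4 : ℝ) (hQ0 : 0 < Q) (hQ1 : Q < 1) (hx0 : 0 < x)
    (hxD : x < ((1 - Q^2) * (Q - Q^2))^2 / 8)
    (hU0 : u0 ≤ 1 + (x*Q^0)/2 - (x*Q^0)^2/8 + (x*Q^0)^3/16)
    (hL1 : 1 + (x*Q^1)/2 - (x*Q^1)^2/8 ≤ u1)
    (hU2 : u2 ≤ 1 + (x*Q^2)/2 - (x*Q^2)^2/8 + (x*Q^2)^3/16)
    (hL3 : 1 + (x*Q^3)/2 - (x*Q^3)^2/8 ≤ u3)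
    (hU4 : u4 ≤ 1 + (x*Q^4)/2 - (x*Q^4)^2/8 + (x*Q^4)^3/16) :
    Q^2 * u0 - 2*Q*(1+Q) * u1 + (1+4*Q+Q^2) * u2 - 2*(1+Q) * u3 + u4 < 0 := by
  obtain ⟨D, hD_def⟩ : ∃ D : ℝ, D = ((1 - Q^2) * (Q - Q^2))^2 := ⟨_, rfl⟩
  rw [← hD_def] at hxD
  have h2 : Q^2 < 1 := by nlinarith
  have hc1 : -(2*Q*(1+Q)) ≤ 0 := by nlinarith
  have hc2 : (0:ℝ) ≤ 1+4*Q+Q^2 := by nlinarith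
  have hc3 : -(2*(1+Q)) ≤ 0 := by nlinarith
  have hE : Q^2 + (1+4*Q+Q^2)*Q^6 + Q^12 < 8 := by
    have h6 : Q^6 ≤ 1 := pow_le_one₀ hQ0.le hQ1.le
    have h12 : Q^12 < 1 := pow_lt_one₀ hQ0.le hQ1 (by norm_num)
    have hA : (1+4*Q+Q^2) < 6 := by linarith
    have hmid : (1+4*Q+Q^2)*Q^6 ≤ (1+4*Q+Q^2) := mul_le_of_le_one_right hc2 h6
    linarith
  have hxcube : (x^3/16) * (Q^2 + (1+4*Q+Q^2)*Q^6 + Q^12) < (x^3/16) * 8 :=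
    mul_lt_mul_of_pos_left hE (by positivity)
  have hlast : -(x^2/8) * D + (x^3/16) * 8 < 0 := by
    have h8 : 8 * x < D := by linarith
    nlinarith [mul_pos (mul_pos hx0 hx0) hx0, mul_pos hx0 hx0]
  have t0 : Q^2 * u0 ≤ Q^2 * (1 + (x*Q^0)/2 - (x*Q^0)^2/8 + (x*Q^0)^3/16) :=
    mul_le_mul_of_nonneg_left hU0 (by positivity)
  have t1 : -(2*Q*(1+Q)) * u1 ≤ -(2*Q*(1+Q)) * (1 + (x*Q^1)/2 - (x*Q^1)^2/8) :=
    mul_le_mul_of_nonpos_left hL1 hc1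
  have t2 : (1+4*Q+Q^2) * u2 ≤ (1+4*Q+Q^2) * (1 + (x*Q^2)/2 - (x*Q^2)^2/8 + (x*Q^2)^3/16) :=
    mul_le_mul_of_nonneg_left hU2 hc2
  have t3 : -(2*(1+Q)) * u3 ≤ -(2*(1+Q)) * (1 + (x*Q^3)/2 - (x*Q^3)^2/8) :=
    mul_le_mul_of_nonpos_left hL3 hc3
  have hcollect : Q^2 * (1 + (x*Q^0)/2 - (x*Q^0)^2/8 + (x*Q^0)^3/16)
      + (-(2*Q*(1+Q))) * (1 + (x*Q^1)/2 - (x*Q^1)^2/8)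
      + (1+4*Q+Q^2) * (1 + (x*Q^2)/2 - (x*Q^2)^2/8 + (x*Q^2)^3/16)
      + (-(2*(1+Q))) * (1 + (x*Q^3)/2 - (x*Q^3)^2/8)
      + (1 + (x*Q^4)/2 - (x*Q^4)^2/8 + (x*Q^4)^3/16)
      = -(x^2/8) * D + (x^3/16) * (Q^2 + (1+4*Q+Q^2)*Q^6 + Q^12) := by
    rw [hD_def]; ring
  linarith [t0, t1, t2, t3, hU4]

set_option maxHeartbeats 1000000 in
/-- A two-atomic probability measure `μ = ρ₀ δ_{x₀} + ρ₁ δ_{x₁}` on `[0,1]` with both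
atoms strictly positive has no square root measure on `[0,∞)` in the
moment-matching sense. -/
theorem two_atomic_has_no_square_root
    (x₀ x₁ : ℝ) (h0 : 0 < x₀) (h01 : x₀ < x₁) (h1 : x₁ ≤ 1)
    (ρ₀ ρ₁ : ℝ≥0∞) (hρ₀ : 0 < ρ₀) (hρ₁ : 0 < ρ₁)
    (μ : Measure ℝ) (hμ : μ = ρ₀ • Measure.dirac x₀ + ρ₁ • Measure.dirac x₁)
    [IsProbabilityMeasure μ] :
    ¬ ∃ ν : Measure ℝ, ν (Iio (0:ℝ)) = 0 ∧
        ∀ n : ℕ, (∫ t, t ^ n ∂μ) = (∫ t, t ^ n ∂ν) ^ 2 := by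
  rintro ⟨ν, hν0, hmom⟩
  -- total masses
  have hsum : ρ₀ + ρ₁ = 1 := by
    have h := measure_univ (μ := μ)
    rw [hμ] at h
    simpa using h
  have h0top : ρ₀ ≠ ⊤ := by intro h; rw [h] at hsum; simp at hsum
  have h1top : ρ₁ ≠ ⊤ := by intro h; rw [h] at hsum; simp at hsum
  set a := ρ₀.toReal with ha_def
  set b := ρ₁.toReal with hb_def
  have ha : 0 < a := ENNReal.toReal_pos hρ₀.ne' h0top
  have hb : 0 < b := ENNReal.toReal_pos hρ₁.ne' h1top
  set m : ℕ → ℝ := fun k => a * x₀ ^ k + b * x₁ ^ k with hm_def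
  have hx1 : 0 < x₁ := h0.trans h01
  have hx1ne : x₁ ≠ 0 := ne_of_gt hx1
  have hmpos : ∀ k, 0 < m k := by
    intro k
    have h1' := mul_pos ha (pow_pos h0 k)
    have h2' := mul_pos hb (pow_pos hx1 k)
    simp only [hm_def]; linarith
  have hdint : ∀ (k : ℕ) (y : ℝ), Integrable (fun t : ℝ => t ^ k) (Measure.dirac y) :=
    fun k y => (integrable_const (y ^ k)).congr (ae_eq_dirac (fun t : ℝ => t ^ k)).symm
  have hμmom : ∀ k : ℕ, (∫ t, t ^ k ∂μ) = m k := by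
    intro k
    rw [hμ, integral_add_measure
        ((integrable_smul_measure hρ₀.ne' h0top).2 (hdint k x₀))
        ((integrable_smul_measure hρ₁.ne' h1top).2 (hdint k x₁)),
      integral_smul_measure, integral_smul_measure, integral_dirac, integral_dirac]
    simp [hm_def, smul_eq_mul]
    rfl
  set c : ℕ → ℝ := fun k => ∫ t, t ^ k ∂ν with hc_def
  have hcsq : ∀ k, c k ^ 2 = m k := fun k => by rw [hc_def, ← hmom k, hμmom k]
  have hcint : ∀ k : ℕ, Integrable (fun t : ℝ => t ^ k) ν := by
    intro k
    by_contra h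
    have hz : c k = 0 := integral_undef h
    have := hmpos k
    nlinarith [hcsq k]
  have hνae : ∀ᵐ t ∂ν, 0 ≤ t := by
    rw [ae_iff]
    convert hν0 using 2
    ext t; simp [Iio, not_le]
  have hcnn : ∀ k, 0 ≤ c k :=
    fun k => integral_nonneg_of_ae (hνae.mono fun t ht => pow_nonneg ht k)
  have hcsqrt : ∀ k, c k = Real.sqrt (m k) := by
    intro k
    rw [← hcsq k, Real.sqrt_sq (hcnn k)]
  -- coefficients of ((x₁ u - x₁²)(x₁ u - x₀²))² as a polynomial in u
  set v0 : ℝ := x₁^4 * x₀^4 with hv0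
  set v1 : ℝ := -(2 * x₁^3 * x₀^2 * (x₀^2 + x₁^2)) with hv1
  set v2 : ℝ := x₁^2 * (x₀^2 + x₁^2)^2 + 2 * x₁^4 * x₀^2 with hv2
  set v3 : ℝ := -(2 * x₁^3 * (x₀^2 + x₁^2)) with hv3
  set v4 : ℝ := x₁^4 with hv4
  -- parameters
  set Q := x₀^2 / x₁^2 with hQ_def
  have hQ0 : 0 < Q := div_pos (pow_pos h0 2) (pow_pos hx1 2)
  have hQ1 : Q < 1 := (div_lt_one (pow_pos hx1 2)).2 (by nlinarith)
  set D := ((1 - Q^2) * (Q - Q^2))^2 with hD_def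
  have hD : 0 < D := by
    have h1' : 0 < 1 - Q^2 := by nlinarith
    have h2' : 0 < Q - Q^2 := by nlinarith
    positivity
  obtain ⟨n, hn⟩ := exists_pow_lt_of_lt_one
    (show (0:ℝ) < (b/a) * min 1 (D/8) by positivity) hQ1
  set x := (a / b) * Q ^ n with hx_def
  have hx0 : 0 < x := by positivity
  have hxmin : x < min 1 (D/8) := by
    rw [hx_def]
    calc (a/b) * Q^n < (a/b) * ((b/a) * min 1 (D/8)) := by
          exact mul_lt_mul_of_pos_left hn (by positivity)
    _ = min 1 (D/8) := by field_simp
  have hxle1 : x ≤ 1 := le_of_lt (lt_of_lt_of_le hxmin (min_le_left _ _))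
  have hxD : x < D/8 := lt_of_lt_of_le hxmin (min_le_right _ _)
  clear_value v0 v1 v2 v3 v4 Q D x
  -- moment positivity certificate
  have I0 : Integrable (fun t : ℝ => v0 * t^(2*n+2*0)) ν := (hcint (2*n+2*0)).const_mul v0
  have I1 : Integrable (fun t : ℝ => v1 * t^(2*n+2*1)) ν := (hcint (2*n+2*1)).const_mul v1
  have I2 : Integrable (fun t : ℝ => v2 * t^(2*n+2*2)) ν := (hcint (2*n+2*2)).const_mul v2
  have I3 : Integrable (fun t : ℝ => v3 * t^(2*n+2*3)) ν := (hcint (2*n+2*3)).const_mul v3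
  have I4 : Integrable (fun t : ℝ => v4 * t^(2*n+2*4)) ν := (hcint (2*n+2*4)).const_mul v4
  have I01 : Integrable (fun t : ℝ => v0 * t^(2*n+2*0) + v1 * t^(2*n+2*1)) ν := I0.add I1
  have I012 : Integrable (fun t : ℝ => v0 * t^(2*n+2*0) + v1 * t^(2*n+2*1)
      + v2 * t^(2*n+2*2)) ν := I01.add I2
  have I0123 : Integrable (fun t : ℝ => v0 * t^(2*n+2*0) + v1 * t^(2*n+2*1)
      + v2 * t^(2*n+2*2) + v3 * t^(2*n+2*3)) ν := I012.add I3
  have key : 0 ≤ v0 * c (2*n+2*0) + v1 * c (2*n+2*1) + v2 * c (2*n+2*2)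
      + v3 * c (2*n+2*3) + v4 * c (2*n+2*4) := by
    have heq : (∫ t, (v0 * t^(2*n+2*0) + v1 * t^(2*n+2*1) + v2 * t^(2*n+2*2)
          + v3 * t^(2*n+2*3) + v4 * t^(2*n+2*4)) ∂ν)
        = v0 * c (2*n+2*0) + v1 * c (2*n+2*1) + v2 * c (2*n+2*2)
          + v3 * c (2*n+2*3) + v4 * c (2*n+2*4) := by
      rw [integral_add I0123 I4, integral_add I012 I3, integral_add I01 I2,
        integral_add I0 I1, integral_const_mul, integral_const_mul,
        integral_const_mul, integral_const_mul, integral_const_mul]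
    rw [← heq]
    apply integral_nonneg
    intro t
    have hident : v0 * t^(2*n+2*0) + v1 * t^(2*n+2*1) + v2 * t^(2*n+2*2)
        + v3 * t^(2*n+2*3) + v4 * t^(2*n+2*4)
        = (t^n * ((x₁ * t^2 - x₁^2) * (x₁ * t^2 - x₀^2)))^2 := by
      simp only [hv0, hv1, hv2, hv3, hv4]
      ring
    simp only [Pi.zero_apply]
    rw [hident]
    exact sq_nonneg _
  -- sqrt decomposition of the moments
  have hd : ∀ j : ℕ, Real.sqrt (m (2*n+2*j))
      = Real.sqrt b * (x₁^n * x₁^j) * Real.sqrt (1 + x * Q^j) := by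
    intro j
    have hstep : m (2*n+2*j) = (x₁^n * x₁^j)^2 * (b * (1 + x * Q^j)) := by
      simp only [hm_def, hx_def, hQ_def]
      simp only [div_pow, ← pow_mul]
      field_simp
      ring
    rw [hstep, Real.sqrt_mul (sq_nonneg _), Real.sqrt_sq (by positivity),
      Real.sqrt_mul hb.le]
    ring
  have hd0 := hd 0
  have hd1 := hd 1
  have hd2 := hd 2
  have hd3 := hd 3
  have hd4 := hd 4
  -- bounds on the square roots
  have hy : ∀ j : ℕ, 0 ≤ x * Q^j ∧ x * Q^j ≤ 1 := by
    intro j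
    refine ⟨by positivity, ?_⟩
    have hq : Q^j ≤ 1 := pow_le_one₀ hQ0.le hQ1.le
    nlinarith
  have hbU0 := sqrt_upper_aux (hy 0).1
  have hbL1 := sqrt_lower_aux (hy 1).1 (hy 1).2
  have hbU2 := sqrt_upper_aux (hy 2).1
  have hbL3 := sqrt_lower_aux (hy 3).1 (hy 3).2
  have hbU4 := sqrt_upper_aux (hy 4).1
  set u0 := Real.sqrt (1 + x * Q^0) with hu0
  set u1 := Real.sqrt (1 + x * Q^1) with hu1
  set u2 := Real.sqrt (1 + x * Q^2) with hu2
  set u3 := Real.sqrt (1 + x * Q^3) with hu3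
  set u4 := Real.sqrt (1 + x * Q^4) with hu4
  clear_value u0 u1 u2 u3 u4
  have keyT : 0 ≤ (Real.sqrt b * x₁^n * x₁^8) *
      (Q^2 * u0 - 2*Q*(1+Q) * u1 + (1+4*Q+Q^2) * u2 - 2*(1+Q) * u3 + u4) := by
    have hrw : (Real.sqrt b * x₁^n * x₁^8) *
        (Q^2 * u0 - 2*Q*(1+Q) * u1 + (1+4*Q+Q^2) * u2 - 2*(1+Q) * u3 + u4)
        = v0 * c (2*n+2*0) + v1 * c (2*n+2*1) + v2 * c (2*n+2*2)
          + v3 * c (2*n+2*3) + v4 * c (2*n+2*4) := by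
      rw [hcsqrt (2*n+2*0), hcsqrt (2*n+2*1), hcsqrt (2*n+2*2), hcsqrt (2*n+2*3),
        hcsqrt (2*n+2*4), hd0, hd1, hd2, hd3, hd4]
      simp only [hv0, hv1, hv2, hv3, hv4, hQ_def]
      field_simp
      ring
    rw [hrw]
    exact key
  have hT : 0 ≤ Q^2 * u0 - 2*Q*(1+Q) * u1 + (1+4*Q+Q^2) * u2 - 2*(1+Q) * u3 + u4 := by
    have hpos : 0 < Real.sqrt b * x₁^n * x₁^8 := by positivity
    by_contra hneg
    push_neg at hneg
    have := mul_neg_of_pos_of_neg hpos hneg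
    linarith
  have hxD' : x < ((1 - Q^2) * (Q - Q^2))^2 / 8 := by rw [← hD_def]; exact hxD
  have hfinal := psi_neg_aux Q x u0 u1 u2 u3 u4 hQ0 hQ1 hx0 hxD' hbU0 hbL1 hbU2 hbL3 hbU4
  linarith
end

section
/- Let g(x) = Σ_{i=0}^n a_i x^i be a polynomial, nonnegative on [0,1]. Then for every a ∈ (0,1), ∫_a^1 g(a/x) g(x) (1/x) dx = Σ_{i=0}^{n-1} ((1-a^{i+1})/(i+1)) Σ_{j=0}^{n-i-1} a_j a_{j+i+1} a^j - (ln a) Σ_{i=0}^n a_i² a^i + Σ_{i=-n-1}^{-2} ((1-a^{i+1})/(i+1)) Σ_{j=-i-1}^n a_j a_{j+i+1} a^j. -/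
open MeasureTheory Set Finset

lemma key_integral_sq_poly (a : ℝ) (ha0 : 0 < a) (ha1 : a < 1) (i j : ℕ) :
    ∫ x in a..1, (a / x) ^ i * x ^ j * (1 / x) =
      a ^ i * (if i = j then -Real.log a
        else (1 - a ^ ((j : ℤ) - (i : ℤ))) / ((j : ℝ) - (i : ℝ))) := by
  have h0 : (0:ℝ) ∉ Set.uIcc a 1 := by
    rw [Set.uIcc_of_le ha1.le]
    intro h
    exact absurd (Set.mem_Icc.mp h).1 (by linarith)
  have hcong : ∫ x in a..1, (a / x) ^ i * x ^ j * (1 / x)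
      = ∫ x in a..1, a ^ i * x ^ ((j : ℤ) - (i : ℤ) - 1) := by
    apply intervalIntegral.integral_congr
    intro x hx
    rw [Set.uIcc_of_le ha1.le] at hx
    have hx0 : x ≠ 0 := ne_of_gt (lt_of_lt_of_le ha0 (Set.mem_Icc.mp hx).1)
    beta_reduce
    rw [zpow_sub₀ hx0, zpow_sub₀ hx0, zpow_one, zpow_natCast, zpow_natCast, div_pow]
    field_simp
  rw [hcong, intervalIntegral.integral_const_mul]
  congr 1
  by_cases hij : i = j
  · subst hij
    rw [if_pos rfl]
    have h1 : ((i:ℤ) - i - 1) = -1 := by ring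
    rw [h1]
    simp only [zpow_neg_one]
    rw [integral_inv h0, one_div, Real.log_inv]
  · rw [if_neg hij]
    rw [integral_zpow (Or.inr ⟨by omega, h0⟩)]
    have h1 : ((j:ℤ) - i - 1 + 1) = (j:ℤ) - i := by ring
    rw [h1, one_zpow]
    congr 1
    push_cast
    ring

lemma tri_decomp_sq_poly (n : ℕ) (F : ℕ → ℕ → ℝ) :
    ∑ i ∈ range (n+1), ∑ j ∈ range (n+1), F i j
    = (∑ d ∈ range n, ∑ j ∈ range (n - d), F j (j + d + 1))
      + (∑ i ∈ range (n+1), F i i)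
      + ∑ k ∈ Icc 2 (n+1), ∑ j ∈ Icc (k-1) n, F j (j + 1 - k) := by
  have hsplit : ∀ i ∈ range (n+1),
      ∑ j ∈ range (n+1), F i j
        = (∑ t ∈ range (n - i), F i (i + 1 + t)) + F i i + ∑ j ∈ range i, F i j := by
    intro i hi
    rw [Finset.mem_range] at hi
    rw [show n + 1 = (i + 1) + (n - i) by omega, Finset.sum_range_add,
      Finset.sum_range_succ]
    ring
  rw [Finset.sum_congr rfl hsplit]
  rw [Finset.sum_add_distrib, Finset.sum_add_distrib]
  congr 1
  · congr 1
    rw [Finset.sum_comm' (s' := fun t => range (n - t)) (t' := range n)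
      (by intro x y; simp only [Finset.mem_range]; omega)]
    apply Finset.sum_congr rfl
    intro d _
    apply Finset.sum_congr rfl
    intro j _
    congr 1
    omega
  · have hinner : ∀ i ∈ range (n+1),
        ∑ j ∈ range i, F i j = ∑ k ∈ Icc 2 (i+1), F i (i + 1 - k) := by
      intro i _
      apply Finset.sum_nbij' (i := fun j => i + 1 - j) (j := fun k => i + 1 - k)
      · intro j hj; rw [Finset.mem_range] at hj; rw [Finset.mem_Icc]; omega
      · intro k hk; rw [Finset.mem_Icc] at hk; rw [Finset.mem_range]; omega
      · intro j hj; rw [Finset.mem_range] at hj; omega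
      · intro k hk; rw [Finset.mem_Icc] at hk; omega
      · intro j hj; rw [Finset.mem_range] at hj; congr 1; omega
    rw [Finset.sum_congr rfl hinner]
    rw [Finset.sum_comm' (s' := fun k => Icc (k-1) n) (t' := Icc 2 (n+1))
      (by intro x y; simp only [Finset.mem_range, Finset.mem_Icc]; omega)]

/-- The explicit formula for the multiplicative self-convolution of a polynomial
density `g(x) = Σ_{i=0}^n c_i x^i` on `(0,1)` (the density of the square of the
measure `g(t) dt`). The third sum of the paper, indexed by `i = -n-1, …, -2`, is
re-indexed here by `k = -i ∈ {2, …, n+1}`. -/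
theorem square_of_polynomial_measure
    (n : ℕ) (c : ℕ → ℝ) (g : ℝ → ℝ)
    (hg : ∀ x, g x = ∑ i ∈ range (n + 1), c i * x ^ i)
    (hg_nonneg : ∀ x ∈ Icc (0:ℝ) 1, 0 ≤ g x)
    (a : ℝ) (ha : a ∈ Ioo (0:ℝ) 1) :
    (∫ x in Ioo a 1, g (a / x) * g x * (1 / x)) =
      (∑ i ∈ range n, ((1 - a ^ (i + 1)) / ((i : ℝ) + 1)) *
          ∑ j ∈ range (n - i), c j * c (j + i + 1) * a ^ j)
        - Real.log a * ∑ i ∈ range (n + 1), (c i) ^ 2 * a ^ i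
        + ∑ k ∈ Icc 2 (n + 1), ((1 - a ^ ((1 : ℤ) - (k : ℤ))) / (1 - (k : ℝ))) *
            ∑ j ∈ Icc (k - 1) n, c j * c (j + 1 - k) * a ^ j := by
  obtain ⟨ha0, ha1⟩ := ha
  have hx0 : ∀ x ∈ Set.uIcc a (1:ℝ), x ≠ 0 := by
    intro x hx
    rw [Set.uIcc_of_le ha1.le] at hx
    exact ne_of_gt (lt_of_lt_of_le ha0 (Set.mem_Icc.mp hx).1)
  have hcont : ∀ i j : ℕ, ContinuousOn
      (fun x : ℝ => c i * c j * ((a / x) ^ i * x ^ j * (1 / x))) (Set.uIcc a 1) := by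
    intro i j
    apply continuousOn_const.mul
    apply ContinuousOn.mul
    apply ContinuousOn.mul
    · exact (continuousOn_const.div continuousOn_id hx0).pow i
    · exact continuousOn_id.pow j
    · exact continuousOn_const.div continuousOn_id hx0
  have hfun : ∀ x : ℝ, g (a / x) * g x * (1 / x)
      = ∑ i ∈ range (n + 1), ∑ j ∈ range (n + 1),
          c i * c j * ((a / x) ^ i * x ^ j * (1 / x)) := by
    intro x
    rw [hg, hg, Finset.sum_mul, Finset.sum_mul]
    apply Finset.sum_congr rfl
    intro i _
    rw [Finset.mul_sum, Finset.sum_mul]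
    apply Finset.sum_congr rfl
    intro j _
    ring
  have hmain : (∫ x in Ioo a 1, g (a / x) * g x * (1 / x)) =
      ∑ i ∈ range (n + 1), ∑ j ∈ range (n + 1),
        c i * c j * (a ^ i * (if i = j then -Real.log a
          else (1 - a ^ ((j : ℤ) - (i : ℤ))) / ((j : ℝ) - (i : ℝ)))) := by
    calc (∫ x in Ioo a 1, g (a / x) * g x * (1 / x))
        = ∫ x in a..1, ∑ i ∈ range (n + 1), ∑ j ∈ range (n + 1),
            c i * c j * ((a / x) ^ i * x ^ j * (1 / x)) := by
          rw [intervalIntegral.integral_of_le ha1.le,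
            MeasureTheory.integral_Ioc_eq_integral_Ioo]
          exact MeasureTheory.setIntegral_congr_fun measurableSet_Ioo (fun x _ => hfun x)
      _ = ∑ i ∈ range (n + 1), ∑ j ∈ range (n + 1),
            c i * c j * ∫ x in a..1, (a / x) ^ i * x ^ j * (1 / x) := by
          rw [intervalIntegral.integral_finset_sum (fun i _ =>
            ContinuousOn.intervalIntegrable (continuousOn_finset_sum _
              (fun j _ => hcont i j)))]
          apply Finset.sum_congr rfl
          intro i _
          rw [intervalIntegral.integral_finset_sum (fun j _ =>
            ContinuousOn.intervalIntegrable (hcont i j))]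
          apply Finset.sum_congr rfl
          intro j _
          exact intervalIntegral.integral_const_mul _ _
      _ = _ := by
          apply Finset.sum_congr rfl
          intro i _
          apply Finset.sum_congr rfl
          intro j _
          rw [key_integral_sq_poly a ha0 ha1 i j]
  rw [hmain, tri_decomp_sq_poly n
    (fun i j => c i * c j * (a ^ i * (if i = j then -Real.log a
      else (1 - a ^ ((j : ℤ) - (i : ℤ))) / ((j : ℝ) - (i : ℝ)))))]
  congr 1
  · rw [sub_eq_add_neg]
    congr 1
    · -- upper triangular part
      apply Finset.sum_congr rfl
      intro d _
      rw [Finset.mul_sum]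
      apply Finset.sum_congr rfl
      intro j _

      rw [if_neg (by omega : ¬ j = j + d + 1)]
      have h2 : ((j + d + 1 : ℕ) : ℤ) - (j : ℤ) = ((d + 1 : ℕ) : ℤ) := by push_cast; ring
      have h3 : ((j + d + 1 : ℕ) : ℝ) - (j : ℝ) = (d : ℝ) + 1 := by push_cast; ring
      rw [h2, zpow_natCast, h3]
      ring
    · -- diagonal part
      rw [Finset.mul_sum, ← Finset.sum_neg_distrib]
      apply Finset.sum_congr rfl
      intro i _
      rw [if_pos rfl]
      ring
  · -- lower triangular part
    apply Finset.sum_congr rfl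
    intro k hk
    rw [Finset.mem_Icc] at hk
    rw [Finset.mul_sum]
    apply Finset.sum_congr rfl
    intro j hj
    rw [Finset.mem_Icc] at hj

    rw [if_neg (by omega : ¬ j = j + 1 - k)]
    have h2 : ((j + 1 - k : ℕ) : ℤ) - (j : ℤ) = 1 - (k : ℤ) := by omega
    have h3 : ((j + 1 - k : ℕ) : ℝ) - (j : ℝ) = 1 - (k : ℝ) := by
      have h4 : ((j + 1 - k : ℕ) : ℝ) = (j : ℝ) + 1 - (k : ℝ) := by
        exact_mod_cast congrArg (Int.cast : ℤ → ℝ)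
          (by omega : ((j + 1 - k : ℕ) : ℤ) = (j : ℤ) + 1 - (k : ℤ))
      rw [h4]; ring
    rw [h2, h3]
    ring
end

section
/- Let W_α and W_β be unilateral weighted shifts with positive weight sequences α and β, and let W_{αβ} be the shift with weights α_n β_n. If W_α and W_β are both k-hyponormal for some k, then W_{αβ} is k-hyponormal. In terms of moments: if for all m the (k+1)×(k+1) Hankel matrices (γ_{m+i+j})_{0≤i,j≤k} and (γ'_{m+i+j})_{0≤i,j≤k} are positive semidefinite, then so are the Hankel matrices of the product sequence (γ_m γ'_m). -/
open MeasureTheory Finset Matrix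

/-- Schur product theorem for real matrices: the entrywise (Hadamard) product of two
positive semidefinite matrices is positive semidefinite. -/
lemma psd_entrywise_mul {n : ℕ} {A B : Matrix (Fin n) (Fin n) ℝ}
    (hA : A.PosSemidef) (hB : B.PosSemidef) :
    (Matrix.of fun i j => A i j * B i j).PosSemidef := by
  obtain ⟨C, rfl⟩ : ∃ C : Matrix (Fin n) (Fin n) ℝ, A = Cᴴ * C := by
    open scoped MatrixOrder in exact CStarAlgebra.nonneg_iff_eq_star_mul_self.mp hA.nonneg
  obtain ⟨D, rfl⟩ : ∃ D : Matrix (Fin n) (Fin n) ℝ, B = Dᴴ * D := by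
    open scoped MatrixOrder in exact CStarAlgebra.nonneg_iff_eq_star_mul_self.mp hB.nonneg
  let E : Matrix (Fin n × Fin n) (Fin n) ℝ := Matrix.of fun p i => C p.1 i * D p.2 i
  have hE : (Matrix.of fun i j => (Cᴴ * C) i j * (Dᴴ * D) i j) = Eᴴ * E := by
    ext i j
    simp only [Matrix.of_apply, Matrix.mul_apply, Matrix.conjTranspose_apply, E,
      Fintype.sum_prod_type, Finset.sum_mul_sum, star, RCLike.star_def]
    refine Finset.sum_congr rfl fun p _ => Finset.sum_congr rfl fun q _ => by
      ring
  rw [hE]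
  exact Matrix.posSemidef_conjTranspose_mul_self E

/-- The Schur product of two `k`-hyponormal weighted shifts is `k`-hyponormal, in terms
of moments: if all the `(k+1)×(k+1)` Hankel moment matrices of the shifts `W_α` and
`W_β` are positive semidefinite, then so are those of the product shift `W_{αβ}`,
whose moment sequence is the entrywise product of the two moment sequences. -/
theorem schur_product_k_hyponormal
    (k : ℕ) (α β : ℕ → ℝ) (hα : ∀ i, 0 < α i) (hβ : ∀ i, 0 < β i)
    (γ γ' : ℕ → ℝ)
    (hγ : ∀ m, γ m = ∏ i ∈ range m, (α i) ^ 2)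
    (hγ' : ∀ m, γ' m = ∏ i ∈ range m, (β i) ^ 2)
    (hHα : ∀ m : ℕ, (Matrix.of fun i j : Fin (k + 1) =>
      γ (m + (i : ℕ) + (j : ℕ))).PosSemidef)
    (hHβ : ∀ m : ℕ, (Matrix.of fun i j : Fin (k + 1) =>
      γ' (m + (i : ℕ) + (j : ℕ))).PosSemidef) :
    ∀ m : ℕ, (Matrix.of fun i j : Fin (k + 1) =>
      γ (m + (i : ℕ) + (j : ℕ)) * γ' (m + (i : ℕ) + (j : ℕ))).PosSemidef :=
  fun m => psd_entrywise_mul (hHα m) (hHβ m)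
end

section
/- For every natural number n, ∫_0^1 t^n · (√2/√π) t (-ln t)^{-1/2} dt squared equals ∫_0^1 t^n · 2t dt; that is, (∫_0^1 (√2/√π) t^{n+1} (-ln t)^{-1/2} dt)^2 = 2/(n+2) for all n ≥ 0. -/
open MeasureTheory Set Real

lemma exp_neg_image_Ioi : (fun u : ℝ => Real.exp (-u)) '' Ioi (0:ℝ) = Ioo (0:ℝ) 1 := by
  ext t
  constructor
  · rintro ⟨u, hu, rfl⟩
    exact ⟨Real.exp_pos _, Real.exp_lt_one_iff.mpr (neg_neg_of_pos hu)⟩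
  · rintro ⟨ht0, ht1⟩
    exact ⟨-Real.log t, by simpa using Real.log_neg ht0 ht1, by simp [Real.exp_log ht0]⟩


lemma key_integral (n : ℕ) :
    ∫ t in Ioo (0:ℝ) 1, t ^ (n + 1) * (-Real.log t) ^ (-(1/2) : ℝ)
      = Real.sqrt π / Real.sqrt ((n : ℝ) + 2) := by
  have h := integral_image_eq_integral_abs_deriv_smul (s := Ioi (0:ℝ))
    (f := fun u => Real.exp (-u)) (f' := fun u => -Real.exp (-u)) measurableSet_Ioi
    (fun x _ => ((Real.hasDerivAt_exp (-x)).comp x ((hasDerivAt_neg x))).hasDerivWithinAt.congr_deriv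
      (by ring))
    (fun a _ b _ hab => by
      have := Real.exp_injective hab; linarith [neg_injective this])
    (fun t => t ^ (n + 1) * (-Real.log t) ^ (-(1/2) : ℝ))
  rw [exp_neg_image_Ioi] at h
  rw [h]
  have heq : ∀ u ∈ Ioi (0:ℝ),
      |( -Real.exp (-u))| • (Real.exp (-u) ^ (n + 1) * (-Real.log (Real.exp (-u))) ^ (-(1/2) : ℝ))
        = u ^ ((1/2 : ℝ) - 1) * Real.exp (-(((n:ℝ) + 2) * u)) := by
    intro u hu
    have : |(-Real.exp (-u))| = Real.exp (-u) := by
      rw [abs_neg, abs_of_pos (Real.exp_pos _)]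
    rw [smul_eq_mul, this, Real.log_exp, neg_neg,
      show ((1/2 : ℝ) - 1) = (-(1/2) : ℝ) by norm_num,
      ← Real.exp_nat_mul, ← mul_assoc, ← Real.exp_add, mul_comm]
    congr 2
    push_cast; ring
  rw [setIntegral_congr_fun measurableSet_Ioi heq,
    integral_rpow_mul_exp_neg_mul_Ioi (by norm_num : (0:ℝ) < 1/2) (by positivity)]
  rw [Real.Gamma_one_half_eq, ← Real.sqrt_eq_rpow, one_div, Real.sqrt_inv]
  have : Real.sqrt ((n:ℝ) + 2) ≠ 0 := by positivity
  field_simp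

/-- The square root of the measure `2t dt` on `(0,1)` is `(√2/√π) t (-ln t)^{-1/2} dt`:
the square of its `n`-th moment equals `∫_0^1 t^n · 2t dt = 2/(n+2)`. -/
theorem sqrt_of_two_t_dt (n : ℕ) :
    (∫ t in Ioo (0:ℝ) 1,
        (Real.sqrt 2 / Real.sqrt π) * t ^ (n + 1) * (-Real.log t) ^ (-(1/2) : ℝ)) ^ 2 =
      (∫ t in Ioo (0:ℝ) 1, t ^ n * (2 * t)) ∧
    (∫ t in Ioo (0:ℝ) 1, t ^ n * (2 * t)) = 2 / ((n : ℝ) + 2) := by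
  have h2 : (∫ t in Ioo (0:ℝ) 1, t ^ n * (2 * t)) = 2 / ((n : ℝ) + 2) := by
    have : (∫ t in Ioo (0:ℝ) 1, t ^ n * (2 * t))
        = ∫ t in (0:ℝ)..1, 2 * t ^ (n + 1) := by
      rw [intervalIntegral.integral_of_le (by norm_num), ← integral_Ioc_eq_integral_Ioo]
      congr 1; ext t; ring
    rw [this, intervalIntegral.integral_const_mul, integral_pow]
    push_cast; ring_nf
  refine ⟨?_, h2⟩
  rw [h2]
  have : (∫ t in Ioo (0:ℝ) 1,
      (Real.sqrt 2 / Real.sqrt π) * t ^ (n + 1) * (-Real.log t) ^ (-(1/2) : ℝ))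
      = (Real.sqrt 2 / Real.sqrt π) * ∫ t in Ioo (0:ℝ) 1,
        t ^ (n + 1) * (-Real.log t) ^ (-(1/2) : ℝ) := by
    rw [← integral_const_mul]; congr 1; ext t; ring
  rw [this, key_integral n, mul_pow, div_pow, div_pow,
    Real.sq_sqrt (by positivity : (0:ℝ) ≤ 2),
    Real.sq_sqrt Real.pi_pos.le,
    Real.sq_sqrt (by positivity : (0:ℝ) ≤ (n:ℝ) + 2)]
  have h1 : (π : ℝ) ≠ 0 := Real.pi_ne_zero
  have h3 : ((n:ℝ) + 2) ≠ 0 := by positivity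
  field_simp
end
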